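/- For any set D of size n and integer k ≤ n, there exists a family U of subsets of D with |U| ≤ 2^{O(k)} · log n such that for every subset S ⊆ D with |S| ≤ k and every subset S' ⊆ S, there exists U ∈ U with U ∩ S = S'. -/

import Mathlib

open Finset

private lemma ppow_aux (x n : ℕ) : x^(n+1) + (n+1) * x^n ≤ (x+1)^(n+1) := by
  induction n with
  | zero => simp
  | succ n ih =>
    calc x^(n+2) + (n+2)*x^(n+1) ≤ (x^(n+1) + (n+1)*x^n) * (x+1) := by ring_nf; omega
      _ ≤ (x+1)^(n+1) * (x+1) := Nat.mul_le_mul_right _ ih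
      _ = (x+1)^(n+2) := by ring

private lemma two_mul_pred_pow (a : ℕ) (ha : 2 ≤ a) : 2 * (a-1)^a ≤ a^a := by
  obtain ⟨c, rfl⟩ : ∃ c, a = c + 2 := ⟨a-2, by omega⟩
  have h : (c+1)^(c+2) + (c+2)*(c+1)^(c+1) ≤ (c+2)^(c+2) := by
    have := ppow_aux (c+1) (c+1); convert this using 3 <;> omega
  have h2 : (c+1)^(c+2) ≤ (c+2)*(c+1)^(c+1) := by
    rw [pow_succ]
    calc (c+1)^(c+1) * (c+1) = (c+1)*(c+1)^(c+1) := Nat.mul_comm _ _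
      _ ≤ (c+2)*(c+1)^(c+1) := Nat.mul_le_mul_right _ (by omega)
  show 2*(c+1)^(c+2) ≤ (c+2)^(c+2)
  omega

private lemma main_ineq (n k t : ℕ) (hk : k ≤ n) (ht : 1 ≤ t) :
    2^(t-1) * (2^n - 2^(n-k))^(2^k * t) < (2^n)^(2^k * t) := by
  have hpos : 0 < (2^n : ℕ)^(2^k*t) := by positivity
  rcases Nat.eq_zero_or_pos k with rfl | hkpos
  · have h0 : 2^n - 2^(n-0) = 0 := by simp
    rw [h0, Nat.zero_pow (by simp; omega)]
    simpa using hpos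
  · have ha : 2 ≤ 2^k := by
      calc 2 = 2^1 := rfl
        _ ≤ 2^k := Nat.pow_le_pow_right (by norm_num) hkpos
    set a := 2^k with haa
    have hmul : 2^(n-k) * a = 2^n := by rw [haa, ← pow_add]; congr 1; omega
    have hsplit : 2^n - 2^(n-k) = 2^(n-k) * (a - 1) := by
      obtain ⟨b, hb⟩ : ∃ b, a = b+1 := ⟨a-1, by omega⟩
      rw [hb] at hmul ⊢
      simp only [Nat.add_sub_cancel]
      have : (2:ℕ)^(n-k) * (b+1) = 2^(n-k)*b + 2^(n-k) := by ring
      omega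
    rw [hsplit, mul_pow]
    have hrw : (2^n:ℕ)^(a*t) = (2^(n-k))^(a*t) * a^(a*t) := by
      rw [← mul_pow, hmul]
    rw [hrw]
    have hX : 0 < ((2:ℕ)^(n-k))^(a*t) := by positivity
    have main : 2^(t-1) * (a-1)^(a*t) < a^(a*t) := ?_
    · calc 2^(t-1) * ((2^(n-k))^(a*t) * (a-1)^(a*t))
          = (2^(n-k))^(a*t) * (2^(t-1) * (a-1)^(a*t)) := by ring
        _ < (2^(n-k))^(a*t) * a^(a*t) := Nat.mul_lt_mul_of_pos_left main hX
    -- 2^(t-1) * (a-1)^(a*t) < a^(a*t)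
    have hkey : (2*(a-1)^a)^t ≤ (a^a)^t := Nat.pow_le_pow_left (two_mul_pred_pow a ha) t
    rw [mul_pow, ← pow_mul, ← pow_mul] at hkey
    have hlt : 2^(t-1) * (a-1)^(a*t) < 2^t * (a-1)^(a*t) := by
      apply Nat.mul_lt_mul_of_pos_right ?_ (Nat.pow_pos (by omega))
      exact Nat.pow_lt_pow_right (by norm_num) (by omega)
    exact hlt.trans_le hkey


private lemma card_filter_inter {α : Type} [DecidableEq α] (D S S' : Finset α)
    (hS : S ⊆ D) (hS' : S' ⊆ S) :
    (D.powerset.filter fun U => U ∩ S = S').card = 2^(D.card - S.card) := by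
  rw [← Finset.card_sdiff_of_subset hS, ← Finset.card_powerset]
  apply Finset.card_nbij' (fun U => U \ S) (fun V => V ∪ S')
  · intro U hU
    simp only [Finset.mem_coe, Finset.mem_filter, Finset.mem_powerset] at hU ⊢
    exact Finset.sdiff_subset_sdiff hU.1 (Finset.Subset.refl S)
  · intro V hV
    simp only [Finset.mem_coe, Finset.mem_powerset] at hV
    simp only [Finset.mem_coe, Finset.mem_filter, Finset.mem_powerset]
    constructor
    · exact Finset.union_subset (hV.trans (Finset.sdiff_subset)) (hS'.trans hS)
    · ext x
      simp only [Finset.mem_inter, Finset.mem_union]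
      constructor
      · rintro ⟨h1 | h1, h2⟩
        · exact absurd h2 (Finset.mem_sdiff.mp (hV h1)).2
        · exact h1
      · intro h; exact ⟨Or.inr h, hS' h⟩
  · intro U hU
    simp only [Finset.mem_coe, Finset.mem_filter, Finset.mem_powerset] at hU
    have := Finset.ext_iff.mp hU.2
    ext x
    simp only [Finset.mem_union, Finset.mem_sdiff]
    specialize this x
    simp only [Finset.mem_inter] at this
    tauto
  · intro V hV
    simp only [Finset.mem_coe, Finset.mem_powerset] at hV
    ext x
    simp only [Finset.mem_sdiff, Finset.mem_union]
    have h1 : x ∈ V → x ∉ S := fun h => (Finset.mem_sdiff.mp (hV h)).2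
    have h2 : x ∈ S' → x ∈ S := fun h => hS' h
    tauto


private lemma sum_choose_le (n k : ℕ) : ∑ i ∈ range (k+1), n.choose i ≤ (n+1)^k := by
  induction k with
  | zero => simp
  | succ k ih =>
    rw [Finset.sum_range_succ]
    have h1 : n.choose (k+1) ≤ n^(k+1) := Nat.choose_le_pow n (k+1)
    have h2 : n^(k+1) ≤ n * (n+1)^k := by
      rw [pow_succ, Nat.mul_comm]
      exact Nat.mul_le_mul_left _ (Nat.pow_le_pow_left (by omega) k)
    calc ∑ i ∈ range (k+1), n.choose i + n.choose (k+1) ≤ (n+1)^k + n * (n+1)^k := by omega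
      _ = (n+1)^(k+1) := by ring

private lemma card_small_powerset {α : Type} [DecidableEq α] (D : Finset α) (k : ℕ) :
    (D.powerset.filter fun S => S.card ≤ k).card ≤ (D.card+1)^k := by
  have : (D.powerset.filter fun S => S.card ≤ k) = (range (k+1)).biUnion (fun i => D.powersetCard i) := by
    ext S
    simp [Finset.mem_powersetCard, Nat.lt_succ_iff]
    tauto
  rw [this]
  calc _ ≤ ∑ i ∈ range (k+1), (D.powersetCard i).card := Finset.card_biUnion_le
    _ = ∑ i ∈ range (k+1), D.card.choose i := by simp [Finset.card_powersetCard]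
    _ ≤ (D.card+1)^k := sum_choose_le _ _

private lemma card_pairs_le {α : Type} [DecidableEq α] (D : Finset α) (k : ℕ) :
    ((D.powerset.filter fun S => S.card ≤ k).sigma (fun S => S.powerset)).card
      ≤ (D.card+1)^k * 2^k := by
  rw [Finset.card_sigma]
  calc ∑ S ∈ (D.powerset.filter fun S => S.card ≤ k), S.powerset.card
      ≤ ∑ _S ∈ (D.powerset.filter fun S => S.card ≤ k), 2^k := by
        apply Finset.sum_le_sum
        intro S hS
        rw [Finset.card_powerset]
        exact Nat.pow_le_pow_right (by norm_num) (Finset.mem_filter.mp hS).2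
    _ = (D.powerset.filter fun S => S.card ≤ k).card * 2^k := by
        rw [Finset.sum_const, smul_eq_mul]
    _ ≤ (D.card+1)^k * 2^k := Nat.mul_le_mul_right _ (card_small_powerset D k)

/-- **Existence of `(n,k)`-universal sets.** There is a constant `C` such that for every
finite set `D` of size `n` and every `k ≤ n`, there is a family `𝒰` of subsets of `D`
of size at most `2^(C·k) · C · (log₂ n + 1)` such that for every `S ⊆ D` with `|S| ≤ k`
and every `S' ⊆ S`, some `U ∈ 𝒰` satisfies `U ∩ S = S'`. -/
theorem universal_set_exists :
    ∃ C : ℕ, 0 < C ∧ ∀ (α : Type) [DecidableEq α] (D : Finset α) (k : ℕ), k ≤ D.card →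
      ∃ 𝒰 : Finset (Finset α), (∀ U ∈ 𝒰, U ⊆ D) ∧
        𝒰.card ≤ 2 ^ (C * k) * C * (Nat.log 2 D.card + 1) ∧
        ∀ S : Finset α, S ⊆ D → S.card ≤ k →
          ∀ S' : Finset α, S' ⊆ S → ∃ U ∈ 𝒰, U ∩ S = S' := by
  classical
  refine ⟨10, by norm_num, ?_⟩
  intro α _ D k hk
  set n := D.card with hn
  set L := Nat.log 2 n + 1 with hL
  set t := k * (L + 1) + 1 with ht
  set m := 2^k * t with hm
  set pairs := ((D.powerset.filter fun S => S.card ≤ k).sigma (fun S => S.powerset)) with hpairs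
  have hnL : n + 1 ≤ 2^L := Nat.lt_pow_succ_log_self (by norm_num) n
  have hP : pairs.card ≤ 2^(t-1) := by
    calc pairs.card ≤ (n+1)^k * 2^k := card_pairs_le D k
      _ ≤ (2^L)^k * 2^k := by
          exact Nat.mul_le_mul_right _ (Nat.pow_le_pow_left hnL k)
      _ = 2^(t-1) := by
          rw [← pow_mul, ← pow_add]
          congr 1
          simp only [ht, Nat.add_sub_cancel]
          ring
  -- Bad-family counting
  have badcard : ∀ S S' : Finset α, S ⊆ D → S.card ≤ k → S' ⊆ S →
      (Fintype.piFinset (fun _ : Fin m => D.powerset.filter fun U => ¬(U ∩ S = S'))).card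
        ≤ (2^n - 2^(n-k))^m := by
    intro S S' hSD hSk hS'
    rw [Fintype.card_piFinset]
    have hc : (D.powerset.filter fun U => ¬(U ∩ S = S')).card = 2^n - 2^(n - S.card) := by
      have h1 : (D.powerset.filter (fun U => U ∩ S = S')).card
          + (D.powerset.filter (fun U => ¬(U ∩ S = S'))).card = D.powerset.card :=
        Finset.card_filter_add_card_filter_not _
      rw [card_filter_inter D S S' hSD hS', Finset.card_powerset] at h1
      simp only [← hn] at h1
      omega
    rw [Finset.prod_const, hc, Finset.card_univ, Fintype.card_fin]
    apply Nat.pow_le_pow_left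
    have : 2^(n-k) ≤ 2^(n-S.card) := Nat.pow_le_pow_right (by norm_num) (by omega)
    omega
  set space := Fintype.piFinset (fun _ : Fin m => D.powerset) with hspace
  have hspacecard : space.card = (2^n)^m := by
    rw [Fintype.card_piFinset]
    simp [Finset.card_powerset, hn]
  have key : ∃ f ∈ space, ∀ S : Finset α, S ⊆ D → S.card ≤ k →
      ∀ S' : Finset α, S' ⊆ S → ∃ i : Fin m, f i ∩ S = S' := by
    by_contra hcon
    push_neg at hcon
    have hsub : space ⊆ pairs.biUnion (fun p =>
        Fintype.piFinset (fun _ : Fin m => D.powerset.filter fun U => ¬(U ∩ p.1 = p.2))) := by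
      intro f hf
      obtain ⟨S, hSD, hSk, S', hS', hbad⟩ := hcon f hf
      refine Finset.mem_biUnion.mpr ⟨⟨S, S'⟩, ?_, ?_⟩
      · simp only [hpairs, Finset.mem_sigma, Finset.mem_filter, Finset.mem_powerset]
        exact ⟨⟨hSD, hSk⟩, hS'⟩
      · rw [Fintype.mem_piFinset]
        intro i
        simp only [Finset.mem_filter]
        exact ⟨Fintype.mem_piFinset.mp hf i, hbad i⟩
    have hcard := Finset.card_le_card hsub
    have hbiU : (pairs.biUnion (fun p =>
        Fintype.piFinset (fun _ : Fin m => D.powerset.filter fun U => ¬(U ∩ p.1 = p.2)))).card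
        ≤ pairs.card * (2^n - 2^(n-k))^m := by
      calc _ ≤ ∑ p ∈ pairs, (Fintype.piFinset
            (fun _ : Fin m => D.powerset.filter fun U => ¬(U ∩ p.1 = p.2))).card :=
            Finset.card_biUnion_le
        _ ≤ ∑ _p ∈ pairs, (2^n - 2^(n-k))^m := by
            apply Finset.sum_le_sum
            intro p hp
            simp only [hpairs, Finset.mem_sigma, Finset.mem_filter, Finset.mem_powerset] at hp
            exact badcard p.1 p.2 hp.1.1 hp.1.2 hp.2
        _ = pairs.card * (2^n - 2^(n-k))^m := by rw [Finset.sum_const, smul_eq_mul]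
    have hcontra : (2^n : ℕ)^m ≤ 2^(t-1) * (2^n - 2^(n-k))^m := by
      calc (2^n : ℕ)^m = space.card := hspacecard.symm
        _ ≤ _ := hcard
        _ ≤ pairs.card * (2^n - 2^(n-k))^m := hbiU
        _ ≤ 2^(t-1) * (2^n - 2^(n-k))^m := Nat.mul_le_mul_right _ hP
    exact absurd hcontra (Nat.not_le.mpr (main_ineq n k t hk (by omega)))
  obtain ⟨f, hf, hgood⟩ := key
  refine ⟨Finset.image f Finset.univ, ?_, ?_, ?_⟩
  · intro U hU
    obtain ⟨i, _, rfl⟩ := Finset.mem_image.mp hU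
    exact Finset.mem_powerset.mp (Fintype.mem_piFinset.mp hf i)
  · calc (Finset.image f Finset.univ).card ≤ m := Finset.card_image_le.trans (by simp)
      _ ≤ 2^(10*k)*10*L := by
          have h1 : t ≤ (k+1)*(L+1) := by rw [ht]; nlinarith
          have h2 : (k+1) ≤ 2^k := Nat.lt_two_pow_self
          have h3 : (L+1) ≤ 2*L := by omega
          calc m ≤ 2^k * ((k+1)*(L+1)) := Nat.mul_le_mul_left _ h1
            _ ≤ 2^k * (2^k*(2*L)) := Nat.mul_le_mul_left _ (Nat.mul_le_mul h2 h3)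
            _ = 2^(2*k)*2*L := by
                have hp : (2:ℕ)^(2*k) = 2^k * 2^k := by rw [two_mul, pow_add]
                rw [hp]; ring
            _ ≤ 2^(10*k)*10*L := by
                have h4 : (2:ℕ)^(2*k) ≤ 2^(10*k) := Nat.pow_le_pow_right (by norm_num) (by omega)
                exact Nat.mul_le_mul_right L (Nat.mul_le_mul h4 (by norm_num))
  · intro S hSD hSk S' hS'
    obtain ⟨i, hi⟩ := hgood S hSD hSk S' hS'
    exact ⟨f i, Finset.mem_image.mpr ⟨i, Finset.mem_univ i, rfl⟩, hi⟩
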